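/- For every Kreweras word w of length 3n (n ≥ 1), the promotion pro(w) is again a Kreweras word of length 3n, and the map pro is a bijection from the set of Kreweras words of length 3n to itself. -/

import Mathlib

/-- The three letters of a Kreweras word. -/
inductive KLetter : Type
  | A | B | C
deriving DecidableEq, Repr

open KLetter

/-- `w` is a Kreweras word of length `3 * n`: it has `n` `A`'s, `n` `B`'s, `n` `C`'s,
and every prefix has at least as many `A`'s as `B`'s and at least as many `A`'s as `C`'s. -/
def IsKrewerasWord (n : ℕ) (w : List KLetter) : Prop :=
  w.length = 3 * n ∧ w.count A = n ∧ w.count B = n ∧ w.count C = n ∧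
  ∀ k : ℕ, (w.take k).count B ≤ (w.take k).count A ∧
           (w.take k).count C ≤ (w.take k).count A

/-- `kiota w` is the smallest index `ι ≥ 1` (1-indexed) such that the prefix of
length `ι` of `w` has equally many `A`'s as `B`'s, or equally many `A`'s as `C`'s
(and `0` if no such index exists). -/
def kiota (w : List KLetter) : ℕ :=
  (((List.range (w.length + 1)).filter fun k =>
      decide (1 ≤ k) &&
      (((w.take k).count A == (w.take k).count B) ||
       ((w.take k).count A == (w.take k).count C))).headD 0)

/-- Promotion of a Kreweras word:
`pro w = (w₂, …, w_{ι-1}, A, w_{ι+1}, …, w_{3n}, w_ι)` where `ι = kiota w`. -/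
def pro (w : List KLetter) : List KLetter :=
  ((w.drop 1).set (kiota w - 2) A) ++ [w.getD (kiota w - 1) A]

/-- The trip permutation `σ_w` of a Kreweras word of length `3 * n`, as a function on
1-indexed positions: `σ_w i` is the unique element of `{1, …, 3n}` congruent to
`kiota (pro^[i-1] w) + i - 1` modulo `3 * n`. -/
def ksigma (n : ℕ) (w : List KLetter) (i : ℕ) : ℕ :=
  (kiota (pro^[i - 1] w) + i - 2) % (3 * n) + 1

/-- `keps w i` is the letter of `pro^[i-1] w` in (1-indexed) position `kiota (pro^[i-1] w)`. -/
def keps (w : List KLetter) (i : ℕ) : KLetter :=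
  (pro^[i - 1] w).getD (kiota (pro^[i - 1] w) - 1) A

/-- The negation swapping `B` and `C` (and fixing `A`). -/
def negL : KLetter → KLetter
  | A => A
  | B => C
  | C => B

open Classical in
/-- The involution `τ_i` on Kreweras words of length `3 * n`: swap the letters in
(1-indexed) positions `i` and `i + 1` if the result is again a Kreweras word,
and otherwise do nothing. -/
noncomputable def tau (n i : ℕ) (w : List KLetter) : List KLetter :=
  let w' := (w.set (i - 1) (w.getD i A)).set i (w.getD (i - 1) A)
  if IsKrewerasWord n w' then w' else w

/-- `tauDown n j = τ_j ∘ τ_{j-1} ∘ ⋯ ∘ τ_1`. -/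
noncomputable def tauDown (n : ℕ) : ℕ → List KLetter → List KLetter
  | 0, w => w
  | j + 1, w => tau n (j + 1) (tauDown n j w)

/-- `evacAux n j = (tauDown n 1) ∘ (tauDown n 2) ∘ ⋯ ∘ (tauDown n j)`. -/
noncomputable def evacAux (n : ℕ) : ℕ → List KLetter → List KLetter
  | 0, w => w
  | j + 1, w => evacAux n j (tauDown n (j + 1) w)

/-- Evacuation on Kreweras words of length `3 * n`:
`evac = (τ_1) ∘ (τ_2 ∘ τ_1) ∘ ⋯ ∘ (τ_{3n-1} ∘ ⋯ ∘ τ_2 ∘ τ_1)`. -/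
noncomputable def evac (n : ℕ) (w : List KLetter) : List KLetter :=
  evacAux n (3 * n - 1) w

/-- `tauAsc n k c = τ_{k+c-1} ∘ ⋯ ∘ τ_{k+1} ∘ τ_k`. -/
noncomputable def tauAsc (n k : ℕ) : ℕ → List KLetter → List KLetter
  | 0, w => w
  | j + 1, w => tau n (k + j) (tauAsc n k j w)

/-- `evacStarAux n j = (tauAsc n 1 (3n-1)) ∘ (tauAsc n 2 (3n-2)) ∘ ⋯ ∘ (tauAsc n j (3n-j))`. -/
noncomputable def evacStarAux (n : ℕ) : ℕ → List KLetter → List KLetter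
  | 0, w => w
  | j + 1, w => evacStarAux n j (tauAsc n (j + 1) (3 * n - (j + 1)) w)

/-- Dual evacuation on Kreweras words of length `3 * n`:
`evac* = (τ_{3n-1} ∘ ⋯ ∘ τ_1) ∘ (τ_{3n-1} ∘ ⋯ ∘ τ_2) ∘ ⋯ ∘ (τ_{3n-1})`. -/
noncomputable def evacStar (n : ℕ) (w : List KLetter) : List KLetter :=
  evacStarAux n (3 * n - 1) w

/-- The three-element "V"-shaped poset: `a < b`, `a < c`, with `b`, `c` incomparable. -/
inductive VP : Type
  | a | b | c
deriving DecidableEq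

instance : PartialOrder VP where
  le x y := x = y ∨ x = VP.a
  le_refl x := Or.inl rfl
  le_trans x y z hxy hyz := by
    rcases hxy with rfl | rfl
    · exact hyz
    · exact Or.inr rfl
  le_antisymm x y hxy hyx := by
    rcases hxy with rfl | rfl
    · rfl
    · rcases hyx with rfl | rfl <;> rfl

/-- The labeling of elements of `V(n) = VP × Fin n` by letters. -/
def vlabel {n : ℕ} (p : VP × Fin n) : KLetter :=
  match p.1 with
  | VP.a => A
  | VP.b => B
  | VP.c => C

/-- `L` is a linear extension of `V(n) = VP × Fin n` (with the product order):
a list of all elements of `V(n)`, each appearing once, such that `L_i ≤ L_j`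
implies `i ≤ j`. -/
def IsLinearExtension (n : ℕ) (L : List (VP × Fin n)) : Prop :=
  L.Nodup ∧ (∀ p : VP × Fin n, p ∈ L) ∧
  ∀ i j : Fin L.length, L.get i ≤ L.get j → (i : ℕ) ≤ (j : ℕ)

/-- A connected Kreweras word: a Kreweras word of length `3 * n` having no proper
nonempty consecutive substring which is itself a Kreweras word. -/
def ConnectedKrewerasWord (n : ℕ) (w : List KLetter) : Prop :=
  IsKrewerasWord n w ∧
  ∀ (u : List KLetter) (m : ℕ), u <:+: w → u ≠ [] → u ≠ w → ¬ IsKrewerasWord m u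

section PromotionProof

open List

/-- Spec of `headD 0` of a filtered `range`. -/
lemma headD_filter_range_spec (q : ℕ → Bool) :
    ∀ N k : ℕ, k < N → q k = true →
      q (((List.range N).filter q).headD 0) = true ∧
      ((List.range N).filter q).headD 0 ≤ k ∧
      ∀ m < ((List.range N).filter q).headD 0, q m = false := by
  intro N
  induction N with
  | zero => intro k hk; exact absurd hk (Nat.not_lt_zero k)
  | succ N ih =>
    intro k hk hqk
    by_cases hex : ∃ k', k' < N ∧ q k' = true
    · obtain ⟨k', hk', hq'⟩ := hex
      have hne : (List.range N).filter q ≠ [] := by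
        intro h
        have := List.filter_eq_nil_iff.mp h k' (List.mem_range.mpr hk')
        exact this hq'
      have hrw : ((List.range (N+1)).filter q).headD 0
          = ((List.range N).filter q).headD 0 := by
        rw [List.range_succ, List.filter_append]
        cases h : (List.range N).filter q with
        | nil => exact absurd h hne
        | cons a l => simp
      rcases Nat.lt_or_ge k N with h | h
      · have := ih k h hqk; rw [hrw]; exact this
      · have := ih k' hk' hq'
        rw [hrw]
        exact ⟨this.1, le_trans this.2.1 (by omega), this.2.2⟩
    · push_neg at hex
      have hkN : k = N := by
        rcases Nat.lt_or_ge k N with h | h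
        · exact absurd hqk (hex k h)
        · omega
      have hnil : (List.range N).filter q = [] := by
        apply List.filter_eq_nil_iff.mpr
        intro a ha
        exact hex a (List.mem_range.mp ha)
      subst hkN
      rw [List.range_succ, List.filter_append, hnil]
      have : List.filter q [k] = [k] := by simp [List.filter, hqk]
      rw [this]
      refine ⟨hqk, le_refl _, ?_⟩
      intro m hm
      have := hex m hm
      simpa using this

/-- Structure of a Kreweras word and its promotion. -/
lemma kw_struct (n : ℕ) (hn : 1 ≤ n) (w : List KLetter) (hw : IsKrewerasWord n w) :
    ∃ (p s : List KLetter) (X : KLetter),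
      (X = B ∨ X = C) ∧
      w = A :: (p ++ X :: s) ∧
      pro w = (p ++ A :: s) ++ [X] ∧
      p.count X = p.count A ∧
      (∀ k, (p.take k).count B ≤ (p.take k).count A ∧
            (p.take k).count C ≤ (p.take k).count A) := by
  obtain ⟨hlen, hA, hB, hC, hpref⟩ := hw
  -- w = A :: t
  obtain ⟨c, t, rfl⟩ : ∃ c t, w = c :: t := by
    cases w with
    | nil => simp at hlen; omega
    | cons c t => exact ⟨c, t, rfl⟩
  have hcA : c = A := by
    have h1 := hpref 1
    cases c with
    | A => rfl
    | B => simp [List.count_cons] at h1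
    | C => simp [List.count_cons] at h1
  subst hcA
  -- kiota spec
  set q : ℕ → Bool := fun k =>
      decide (1 ≤ k) &&
      ((((A :: t).take k).count A == ((A :: t).take k).count B) ||
       (((A :: t).take k).count A == ((A :: t).take k).count C)) with hq
  have hlen' : t.length = 3 * n - 1 := by simp at hlen; omega
  have hq3n : q (3 * n) = true := by
    have htk : (A :: t).take (3 * n) = A :: t := by
      apply List.take_of_length_le; simp; omega
    simp only [hq, htk, hA, hB]
    simp [Nat.one_le_iff_ne_zero]; omega
  have hspec := headD_filter_range_spec q ((A :: t).length + 1) (3 * n)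
      (by simp; omega) hq3n
  have hkio : kiota (A :: t) = ((List.range ((A :: t).length + 1)).filter q).headD 0 := rfl
  set ι := kiota (A :: t) with hι
  rw [← hkio] at hspec
  obtain ⟨hqι, hιle, hmin⟩ := hspec
  simp only [hq, Bool.and_eq_true, Bool.or_eq_true, decide_eq_true_eq, beq_iff_eq] at hqι
  obtain ⟨hι1, hqeq⟩ := hqι
  -- ι ≥ 2
  have hι2 : 2 ≤ ι := by
    by_contra h
    have h1 : ι = 1 := by omega
    rw [h1] at hqeq
    simp [List.count_cons] at hqeq
  set j := ι - 2 with hj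
  have hιj : ι = j + 2 := by omega
  have hjlt : j < t.length := by omega
  obtain ⟨p, X, s, hplen, ht⟩ : ∃ p X s, p.length = j ∧ t = p ++ X :: s := by
    refine ⟨t.take j, t[j], t.drop (j+1), by simp; omega, ?_⟩
    rw [List.getElem_cons_drop]
    exact (List.take_append_drop j t).symm
  -- useful take computations
  have htake1 : (A :: t).take (j + 1) = A :: p := by
    rw [List.take_succ_cons, ht, ← hplen, List.take_left]
  have htake2 : (A :: t).take (j + 2) = A :: (p ++ [X]) := by
    rw [List.take_succ_cons]
    congr 1
    rw [ht, show j + 1 = (p ++ [X]).length by simp [hplen],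
        show (p ++ X :: s) = (p ++ [X]) ++ s by simp]
    rw [List.take_left]
  -- minimality at j+1
  have hm1 := hmin (j + 1) (by omega)
  simp only [hq, Bool.and_eq_true, Bool.or_eq_true, decide_eq_true_eq, beq_iff_eq,
    Bool.and_eq_false_iff, Bool.or_eq_false_iff] at hm1
  rw [htake1] at hm1
  have hmB : (A :: p).count A ≠ (A :: p).count B ∧ (A :: p).count A ≠ (A :: p).count C := by
    rcases hm1 with h | h
    · simp at h
    · constructor
      · intro hh; rw [hh] at h; simp at h
      · intro hh; rw [hh] at h; simp at h
  have hprefj := hpref (j + 1)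
  rw [htake1] at hprefj
  rw [hιj, htake2] at hqeq
  -- case on X
  have hXBC : X = B ∨ X = C := by
    cases X with
    | A =>
      exfalso
      simp [List.count_cons, List.count_append] at hqeq hmB hprefj
      omega
    | B => left; rfl
    | C => right; rfl
  have hcntX : p.count X = p.count A := by
    rcases hXBC with rfl | rfl <;>
      simp [List.count_cons, List.count_append] at hqeq hmB hprefj ⊢ <;> omega
  -- prefix inequalities for p
  have hptake : ∀ k, (p.take k).count B ≤ (p.take k).count A ∧
      (p.take k).count C ≤ (p.take k).count A := by
    intro k
    rcases Nat.lt_or_ge k j with hk | hk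
    · have hm2 := hmin (k + 1) (by omega)
      simp only [hq, Bool.and_eq_true, Bool.or_eq_true, decide_eq_true_eq, beq_iff_eq,
        Bool.and_eq_false_iff, Bool.or_eq_false_iff] at hm2
      have htk : (A :: t).take (k + 1) = A :: p.take k := by
        rw [List.take_succ_cons, ht, List.take_append_of_le_length (by omega)]
      rw [htk] at hm2
      have hprefk := hpref (k + 1)
      rw [htk] at hprefk
      have hne : (A :: p.take k).count A ≠ (A :: p.take k).count B ∧
          (A :: p.take k).count A ≠ (A :: p.take k).count C := by
        rcases hm2 with h | h
        · simp at h
        · constructor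
          · intro hh; rw [hh] at h; simp at h
          · intro hh; rw [hh] at h; simp at h
      simp [List.count_cons] at hprefk hne
      omega
    · have hpk : p.take k = p := by
        apply List.take_of_length_le; omega
      rw [hpk]
      simp [List.count_cons] at hprefj hmB
      omega
  -- pro computation
  have hpro : pro (A :: t) = (p ++ A :: s) ++ [X] := by
    unfold pro
    rw [← hι, hιj]
    congr 1
    · show (List.drop 1 (A :: t)).set (j + 2 - 2) A = p ++ A :: s
      simp only [List.drop_succ_cons, List.drop_zero]
      rw [show j + 2 - 2 = j by omega, ht]
      rw [List.set_eq_take_cons_drop A (by simp; omega)]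
      congr 1
      · rw [← hplen, List.take_left]
      · congr 1
        rw [show j + 1 = (p ++ [X]).length by simp [hplen],
            show (p ++ X :: s) = (p ++ [X]) ++ s by simp, List.drop_left]
    · show [(A :: t).getD (j + 2 - 1) A] = [X]
      rw [show j + 2 - 1 = j + 1 by omega, List.getD_cons_succ, ht, ← hplen]
      have := List.getD_append_right p (X :: s) A p.length (le_refl _)
      simp only [this]
      simp
  exact ⟨p, s, X, hXBC, by rw [ht], hpro, hcntX, hptake⟩

end PromotionProof
section PromotionProof2

open List

/-- Promotion preserves Kreweras words. -/
lemma pro_isKreweras (n : ℕ) (hn : 1 ≤ n) (w : List KLetter) (hw : IsKrewerasWord n w) :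
    IsKrewerasWord n (pro w) := by
  obtain ⟨p, s, X, hXBC, hweq, hpro, hcntX, hptake⟩ := kw_struct n hn w hw
  obtain ⟨hlen, hA, hB, hC, hpref⟩ := hw
  subst hweq
  rw [hpro]
  have hlen' : p.length + s.length + 2 = 3 * n := by simp at hlen; omega
  -- counts of w in decomposed form
  have hcA : p.count A + s.count A + 1 = n := by
    rcases hXBC with rfl | rfl <;> simp [List.count_cons, List.count_append] at hA <;> omega
  have hcB : p.count B + s.count B + (if X = B then 1 else 0) = n := by
    rcases hXBC with rfl | rfl <;> simp [List.count_cons, List.count_append] at hB ⊢ <;> omega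
  have hcC : p.count C + s.count C + (if X = C then 1 else 0) = n := by
    rcases hXBC with rfl | rfl <;> simp [List.count_cons, List.count_append] at hC ⊢ <;> omega
  have hXne : ¬(X = B ∧ X = C) := by rcases hXBC with rfl | rfl <;> simp
  refine ⟨by simp; try omega, ?_, ?_, ?_, ?_⟩
  · rcases hXBC with rfl | rfl <;> simp [List.count_cons, List.count_append] <;> omega
  · rcases hXBC with rfl | rfl <;> simp [List.count_cons, List.count_append] at hcB ⊢ <;> omega
  · rcases hXBC with rfl | rfl <;> simp [List.count_cons, List.count_append] at hcC ⊢ <;> omega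
  · intro k
    rcases Nat.lt_or_ge k (p.length + 1) with hk | hk
    · -- prefix inside p
      have htk : (((p ++ A :: s) ++ [X]).take k) = p.take k ++ (A :: s).take (k - p.length) := by
        rw [List.take_append_of_le_length (by simp; try omega), List.take_append]
      have h0 : k - p.length = 0 := by omega
      rw [htk, h0]
      simpa using hptake k
    · rcases Nat.lt_or_ge k (p.length + s.length + 2) with hk3 | hk3
      · -- prefix p ++ A :: s.take m
        set m := k - p.length - 1 with hm
        have hms : m ≤ s.length := by omega
        have htk : (((p ++ A :: s) ++ [X]).take k) = p ++ A :: s.take m := by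
          rw [List.take_append_of_le_length (by simp; try omega)]
          rw [show k = p.length + (1 + m) by omega,
              show p ++ A :: s = (p ++ [A]) ++ s by simp,
              show p.length + (1 + m) = (p ++ [A]).length + m by simp; try omega,
              List.take_length_add_append]
          simp
        -- compare with the prefix of w of length p.length + 2 + m
        have hwtk : ((A :: (p ++ X :: s)).take (p.length + 2 + m)) = A :: (p ++ X :: s.take m) := by
          rw [show p.length + 2 + m = (p.length + 1 + m) + 1 by omega, List.take_succ_cons]
          congr 1
          rw [show p ++ X :: s = (p ++ [X]) ++ s by simp,
              show p.length + 1 + m = (p ++ [X]).length + m by simp; try omega,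
              List.take_length_add_append]
          simp
        have hp2 := hpref (p.length + 2 + m)
        rw [hwtk] at hp2
        rw [htk]
        rcases hXBC with rfl | rfl <;>
          simp [List.count_cons, List.count_append] at hp2 ⊢ <;> omega
      · -- whole word
        rw [List.take_of_length_le (by simp; try omega)]
        have h2 := hpref (3 * n)
        rw [List.take_of_length_le (by simp; try omega)] at h2
        rcases hXBC with rfl | rfl <;>
          simp [List.count_cons, List.count_append] at h2 ⊢ <;> try omega

/-- Two different split positions are impossible. -/
lemma kw_unique_pos {n : ℕ} {p s p' s' : List KLetter} {X : KLetter}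
    (hXBC : X = B ∨ X = C)
    (hw : IsKrewerasWord n (A :: (p ++ X :: s)))
    (hp : p.count X = p.count A) (hp' : p'.count X = p'.count A)
    (hL : p ++ A :: s = p' ++ A :: s') (hlt : p.length < p'.length) : False := by
  have hlen : p.length + 1 + s.length = p'.length + 1 + s'.length := by
    have h := congrArg List.length hL; simp at h; omega
  set m := p'.length - p.length - 1 with hm
  have hmlt : m < s.length := by omega
  -- p' = (p ++ [A]) ++ s.take m
  have hp'eq : p' = (p ++ [A]) ++ s.take m := by
    have h1 : List.take p'.length (p ++ A :: s) = (p ++ [A]) ++ s.take m := by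
      rw [show p ++ A :: s = (p ++ [A]) ++ s by simp,
          show p'.length = (p ++ [A]).length + m by simp; try omega,
          List.take_length_add_append]
    rw [hL, List.take_left] at h1
    exact h1
  -- count X (s.take m) = count A (s.take m) + 1
  have hc : (s.take m).count X = (s.take m).count A + 1 := by
    rw [hp'eq] at hp'
    rcases hXBC with rfl | rfl <;>
      simp [List.count_cons, List.count_append] at hp' ⊢ <;> omega
  -- Kreweras prefix of w at p.length + 2 + m
  have hpref := hw.2.2.2.2 (p.length + 2 + m)
  have htake : (A :: (p ++ X :: s)).take (p.length + 2 + m) = A :: (p ++ X :: s.take m) := by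
    rw [show p.length + 2 + m = (p.length + 1 + m) + 1 by omega, List.take_succ_cons]
    congr 1
    rw [show p ++ X :: s = (p ++ [X]) ++ s by simp,
        show p.length + 1 + m = (p ++ [X]).length + m by simp; try omega,
        List.take_length_add_append]
    simp
  rw [htake] at hpref
  rcases hXBC with rfl | rfl <;>
    simp [List.count_cons, List.count_append] at hpref <;> try omega

instance : Fintype KLetter :=
  Fintype.ofList [KLetter.A, KLetter.B, KLetter.C] (by intro x; cases x <;> simp)

end PromotionProof2
/-- Promotion sends Kreweras words of length `3n` to Kreweras words of length `3n`,
and is a bijection on the set of Kreweras words of length `3n`. -/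
theorem promotion_bijection (n : ℕ) (hn : 1 ≤ n) :
    (∀ w : List KLetter, IsKrewerasWord n w → IsKrewerasWord n (pro w)) ∧
    Set.BijOn pro {w : List KLetter | IsKrewerasWord n w}
      {w : List KLetter | IsKrewerasWord n w} := by
  have hmaps : Set.MapsTo pro {w : List KLetter | IsKrewerasWord n w}
      {w : List KLetter | IsKrewerasWord n w} := by
    intro w hw
    exact pro_isKreweras n hn w hw
  have hinj : Set.InjOn pro {w : List KLetter | IsKrewerasWord n w} := by
    intro w hw w' hw' heq
    obtain ⟨p, s, X, hXBC, hweq, hpro, hcnt, -⟩ := kw_struct n hn w hw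
    obtain ⟨p', s', X', hXBC', hweq', hpro', hcnt', -⟩ := kw_struct n hn w' hw'
    rw [hpro, hpro'] at heq
    have hlen1 : (p ++ A :: s).length = (p' ++ A :: s').length := by
      have h1 : w.length = 3 * n := hw.1
      have h2 : w'.length = 3 * n := hw'.1
      rw [hweq] at h1; rw [hweq'] at h2
      simp at h1 h2 ⊢; omega
    obtain ⟨hL, hX⟩ := List.append_inj heq hlen1
    have hXX : X = X' := by simpa using hX
    subst hXX
    rcases lt_trichotomy p.length p'.length with h | h | h
    · exact absurd (kw_unique_pos hXBC (hweq ▸ hw) hcnt hcnt' hL h) (not_false)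
    · obtain ⟨hpp, hss⟩ := List.append_inj hL h
      have hss' : s = s' := by simpa using hss
      rw [hweq, hweq', hpp, hss']
    · exact absurd (kw_unique_pos hXBC' (hweq' ▸ hw') hcnt' hcnt hL.symm h) (not_false)
  have hfin : ({w : List KLetter | IsKrewerasWord n w} : Set (List KLetter)).Finite := by
    apply Set.Finite.subset (List.finite_length_eq KLetter (3 * n))
    intro w hw
    exact hw.1
  exact ⟨fun w hw => pro_isKreweras n hn w hw,
    (hfin.injOn_iff_bijOn_of_mapsTo hmaps).mp hinj⟩
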